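/- Let N ≥ 2 and let j, k be natural numbers. Let P be a polynomial over ℂ in the variables indexed by Fin N ⊕ Fin N which is bihomogeneous of bidegree (j,k) and formally harmonic. Then: (a) for each l, the polynomial pderiv(inr l) P is bihomogeneous of bidegree (j, k−1) (it is zero when k = 0) and formally harmonic; and (b) for each l, the polynomial X_{inl l}·P − (1/(N − 1 + j + k))·(Σ_{i} X_{inl i}·X_{inr i})·pderiv(inr l) P is bihomogeneous of bidegree (j+1, k) and formally harmonic. -/

import Mathlib

open MvPolynomial

/-- `P` is bihomogeneous of bidegree `(j,k)`: every monomial has total degree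
`j` in the `inl`-variables (the `z_i`) and total degree `k` in the
`inr`-variables (the `z̄_i`). -/
def IsBihomogeneous {N : ℕ} (P : MvPolynomial (Fin N ⊕ Fin N) ℂ) (j k : ℕ) : Prop :=
  ∀ m ∈ P.support, (∑ i : Fin N, m (Sum.inl i)) = j ∧ (∑ i : Fin N, m (Sum.inr i)) = k

/-- `P` is formally harmonic: `Σ_i ∂_{z_i} ∂_{z̄_i} P = 0`. -/
def IsFormallyHarmonic {N : ℕ} (P : MvPolynomial (Fin N ⊕ Fin N) ℂ) : Prop :=
  ∑ i : Fin N, pderiv (Sum.inl i) (pderiv (Sum.inr i) P) = 0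

lemma my_coeff_pderiv {σ : Type*} [DecidableEq σ] (i : σ) (P : MvPolynomial σ ℂ) (m : σ →₀ ℕ) :
    coeff m (pderiv i P) = ((m i : ℂ) + 1) * coeff (m + Finsupp.single i 1) P := by
  induction P using MvPolynomial.induction_on' with
  | monomial n a =>
    rw [pderiv_monomial, coeff_monomial, coeff_monomial]
    by_cases hni : n i = 0
    · have h2 : n ≠ m + Finsupp.single i 1 := by
        intro h
        apply absurd hni
        rw [h]; simp
      rw [if_neg h2, mul_zero]
      by_cases h3 : n - Finsupp.single i 1 = m
      · rw [if_pos h3]; simp [hni]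
      · rw [if_neg h3]
    · have key : n - Finsupp.single i 1 = m ↔ n = m + Finsupp.single i 1 := by
        constructor
        · intro h
          ext t
          have h5 : n t - (Finsupp.single i 1) t = m t := by
            rw [← Finsupp.tsub_apply, h]
          rw [Finsupp.add_apply]
          by_cases ht : i = t
          · subst ht
            rw [Finsupp.single_apply, if_pos rfl] at h5 ⊢
            omega
          · rw [Finsupp.single_apply, if_neg ht] at h5 ⊢
            omega
        · intro h
          rw [h]
          exact add_tsub_cancel_right _ _
      by_cases h : n = m + Finsupp.single i 1
      · rw [if_pos (key.mpr h), if_pos h, h]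
        rw [Finsupp.add_apply, Finsupp.single_apply, if_pos rfl]
        push_cast
        ring
      · rw [if_neg (fun hh => h (key.mp hh)), if_neg h, mul_zero]
  | add p q hp hq =>
    rw [map_add, coeff_add, coeff_add, hp, hq]; ring

lemma my_mem_support_pderiv {σ : Type*} [DecidableEq σ] {i : σ} {P : MvPolynomial σ ℂ}
    {m : σ →₀ ℕ} (h : m ∈ (pderiv i P).support) : m + Finsupp.single i 1 ∈ P.support := by
  rw [mem_support_iff] at h ⊢
  intro h0
  exact h (by rw [my_coeff_pderiv, h0, mul_zero])

lemma my_pderiv_comm {σ : Type*} [DecidableEq σ] (i j : σ) (P : MvPolynomial σ ℂ) :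
    pderiv i (pderiv j P) = pderiv j (pderiv i P) := by
  ext m
  rw [my_coeff_pderiv, my_coeff_pderiv, my_coeff_pderiv, my_coeff_pderiv,
    show m + Finsupp.single i 1 + Finsupp.single j 1
      = m + Finsupp.single j 1 + Finsupp.single i 1 from add_right_comm _ _ _]
  by_cases h : i = j
  · subst h; ring
  · simp only [Finsupp.add_apply, Finsupp.single_apply, if_neg h, if_neg (Ne.symm h), add_zero]
    -- push_cast
    ring

lemma my_X_mul_pderiv_monomial {σ : Type*} [DecidableEq σ] (s : σ) (m : σ →₀ ℕ) (a : ℂ) :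
    X s * pderiv s (monomial m a) = monomial m (a * m s) := by
  rw [pderiv_monomial]
  by_cases h : m s = 0
  · simp [h]
  · rw [show (X s : MvPolynomial σ ℂ) = monomial (Finsupp.single s 1) 1 from rfl,
      monomial_mul, one_mul]
    have hm : Finsupp.single s 1 + (m - Finsupp.single s 1) = m := by
      ext t
      rw [Finsupp.add_apply, Finsupp.tsub_apply]
      by_cases ht : s = t
      · subst ht
        rw [Finsupp.single_apply, if_pos rfl]
        omega
      · rw [Finsupp.single_apply, if_neg ht]
        omega
    rw [hm]

lemma my_euler {σ : Type*} [DecidableEq σ] {N : ℕ} (f : Fin N → σ)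
    (P : MvPolynomial σ ℂ) (d : ℕ)
    (h : ∀ m ∈ P.support, (∑ i : Fin N, m (f i)) = d) :
    ∑ i : Fin N, X (f i) * pderiv (f i) P = C (d : ℂ) * P := by
  have key : ∀ i : Fin N, X (f i) * pderiv (f i) P
      = ∑ m ∈ P.support, monomial m (coeff m P * m (f i)) := by
    intro i
    conv_lhs => rw [P.as_sum]
    rw [map_sum, Finset.mul_sum]
    exact Finset.sum_congr rfl fun m _ => my_X_mul_pderiv_monomial _ _ _
  calc ∑ i : Fin N, X (f i) * pderiv (f i) P
      = ∑ m ∈ P.support, ∑ i : Fin N, monomial m (coeff m P * m (f i)) := by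
        rw [← Finset.sum_comm]
        exact Finset.sum_congr rfl fun i _ => key i
    _ = ∑ m ∈ P.support, monomial m ((d : ℂ) * coeff m P) := by
        refine Finset.sum_congr rfl fun m hm => ?_
        rw [← map_sum, ← Finset.mul_sum]
        congr 1
        rw [← Nat.cast_sum, h m hm]
        ring
    _ = C (d : ℂ) * P := by
        conv_rhs => rw [P.as_sum, Finset.mul_sum]
        exact Finset.sum_congr rfl fun m _ => (C_mul_monomial).symm

lemma IsBihomogeneous.sub {N : ℕ} {P Q : MvPolynomial (Fin N ⊕ Fin N) ℂ} {j k : ℕ}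
    (hP : IsBihomogeneous P j k) (hQ : IsBihomogeneous Q j k) :
    IsBihomogeneous (P - Q) j k := by
  intro m hm
  rw [mem_support_iff, coeff_sub] at hm
  by_cases h : coeff m P = 0
  · exact hQ m (mem_support_iff.mpr (by intro h0; rw [h, h0, sub_zero] at hm; exact hm rfl))
  · exact hP m (mem_support_iff.mpr h)

lemma IsBihomogeneous.mul {N : ℕ} {P Q : MvPolynomial (Fin N ⊕ Fin N) ℂ} {a b c d : ℕ}
    (hP : IsBihomogeneous P a b) (hQ : IsBihomogeneous Q c d) :
    IsBihomogeneous (P * Q) (a + c) (b + d) := by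
  intro m hm
  have h := MvPolynomial.support_mul P Q hm
  rw [Finset.mem_add] at h
  obtain ⟨m1, hm1, m2, hm2, rfl⟩ := h
  obtain ⟨h1, h2⟩ := hP m1 hm1
  obtain ⟨h3, h4⟩ := hQ m2 hm2
  constructor
  · rw [← h1, ← h3, ← Finset.sum_add_distrib]
    exact Finset.sum_congr rfl fun i _ => Finsupp.add_apply _ _ _
  · rw [← h2, ← h4, ← Finset.sum_add_distrib]
    exact Finset.sum_congr rfl fun i _ => Finsupp.add_apply _ _ _

lemma IsBihomogeneous.sum {N : ℕ} {ι : Type*} (s : Finset ι)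
    (f : ι → MvPolynomial (Fin N ⊕ Fin N) ℂ) {j k : ℕ}
    (h : ∀ i ∈ s, IsBihomogeneous (f i) j k) :
    IsBihomogeneous (∑ i ∈ s, f i) j k := by
  intro m hm
  rw [mem_support_iff, coeff_sum] at hm
  obtain ⟨i, hi, hne⟩ := Finset.exists_ne_zero_of_sum_ne_zero hm
  exact h i hi m (mem_support_iff.mpr hne)

lemma isBihomogeneous_X_inl {N : ℕ} (l : Fin N) :
    IsBihomogeneous (X (Sum.inl l) : MvPolynomial (Fin N ⊕ Fin N) ℂ) 1 0 := by
  intro m hm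
  rw [support_X, Finset.mem_singleton] at hm
  subst hm
  constructor <;> simp [Finsupp.single_apply, Sum.inl.injEq]

lemma isBihomogeneous_X_inr {N : ℕ} (l : Fin N) :
    IsBihomogeneous (X (Sum.inr l) : MvPolynomial (Fin N ⊕ Fin N) ℂ) 0 1 := by
  intro m hm
  rw [support_X, Finset.mem_singleton] at hm
  subst hm
  constructor <;> simp [Finsupp.single_apply, Sum.inr.injEq]

lemma isBihomogeneous_C {N : ℕ} (c : ℂ) :
    IsBihomogeneous (C c : MvPolynomial (Fin N ⊕ Fin N) ℂ) 0 0 := by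
  intro m hm
  rw [C_apply] at hm
  have := support_monomial_subset hm
  rw [Finset.mem_singleton] at this
  subst this
  simp

lemma my_pderiv_inr_sumXX {N : ℕ} (i : Fin N) :
    pderiv (Sum.inr i)
      (∑ t : Fin N, (X (Sum.inl t) * X (Sum.inr t) : MvPolynomial (Fin N ⊕ Fin N) ℂ))
      = X (Sum.inl i) := by
  rw [map_sum, Finset.sum_eq_single i]
  · rw [pderiv_mul, pderiv_X_of_ne (by simp), zero_mul, pderiv_X_self, mul_one, zero_add]
  · intro t _ hti
    rw [pderiv_mul, pderiv_X_of_ne (by simp), zero_mul,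
      pderiv_X_of_ne (by simp [Sum.inr.injEq, hti]), mul_zero, add_zero]
  · exact fun h => absurd (Finset.mem_univ i) h

lemma my_pderiv_inl_sumXX {N : ℕ} (i : Fin N) :
    pderiv (Sum.inl i)
      (∑ t : Fin N, (X (Sum.inl t) * X (Sum.inr t) : MvPolynomial (Fin N ⊕ Fin N) ℂ))
      = X (Sum.inr i) := by
  rw [map_sum, Finset.sum_eq_single i]
  · rw [pderiv_mul, pderiv_X_self, one_mul, pderiv_X_of_ne (by simp), mul_zero, add_zero]
  · intro t _ hti
    rw [pderiv_mul, pderiv_X_of_ne (by simp [Sum.inl.injEq, hti]), zero_mul,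
      pderiv_X_of_ne (by simp), mul_zero, add_zero]
  · exact fun h => absurd (Finset.mem_univ i) h

lemma IsBihomogeneous.cast {N : ℕ} {P : MvPolynomial (Fin N ⊕ Fin N) ℂ} {j k j' k' : ℕ}
    (h : IsBihomogeneous P j k) (hj : j = j') (hk : k = k') : IsBihomogeneous P j' k' :=
  hj ▸ hk ▸ h


/-- the harmonic decomposition
`z_l·𝒴_{j,k} = (z_l𝒴_{j,k} − |z|²∂_{z̄_l}𝒴_{j,k}/(n+j+k)) + |z|²∂_{z̄_l}𝒴_{j,k}/(n+j+k)`
into harmonic bihomogeneous parts of bidegrees `(j+1,k)` and `(j,k−1)`, `n = N−1`. -/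
theorem stmt_4 (N : ℕ) (hN : 2 ≤ N) (j k : ℕ)
    (P : MvPolynomial (Fin N ⊕ Fin N) ℂ)
    (hbi : IsBihomogeneous P j k) (hharm : IsFormallyHarmonic P) (l : Fin N) :
    (IsBihomogeneous (pderiv (Sum.inr l) P) j (k - 1) ∧
      (k = 0 → pderiv (Sum.inr l) P = 0) ∧
      IsFormallyHarmonic (pderiv (Sum.inr l) P)) ∧
    (IsBihomogeneous
        (X (Sum.inl l) * P -
          C (1 / ((N : ℂ) - 1 + j + k)) *
            (∑ i : Fin N, X (Sum.inl i) * X (Sum.inr i)) * pderiv (Sum.inr l) P)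
        (j + 1) k ∧
      IsFormallyHarmonic
        (X (Sum.inl l) * P -
          C (1 / ((N : ℂ) - 1 + j + k)) *
            (∑ i : Fin N, X (Sum.inl i) * X (Sum.inr i)) * pderiv (Sum.inr l) P)) := by
  classical
  have hharm' : ∑ i : Fin N, pderiv (Sum.inl i) (pderiv (Sum.inr i) P) = 0 := hharm
  set c : ℂ := 1 / ((N : ℂ) - 1 + j + k) with hc
  set R : MvPolynomial (Fin N ⊕ Fin N) ℂ := ∑ i : Fin N, X (Sum.inl i) * X (Sum.inr i)
    with hR
  set D : MvPolynomial (Fin N ⊕ Fin N) ℂ := pderiv (Sum.inr l) P with hDdef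
  -- support facts for D
  have hDsupp : ∀ m ∈ D.support,
      (∑ i : Fin N, m (Sum.inl i)) = j ∧ (∑ i : Fin N, m (Sum.inr i)) + 1 = k := by
    intro m hm
    have h2 := my_mem_support_pderiv hm
    obtain ⟨h3, h4⟩ := hbi _ h2
    constructor
    · rw [← h3]
      refine Finset.sum_congr rfl fun i _ => ?_
      rw [Finsupp.add_apply, Finsupp.single_apply, if_neg (by simp), add_zero]
    · rw [← h4]
      have : ∀ i : Fin N, (m + Finsupp.single (Sum.inr l) 1 : (Fin N ⊕ Fin N) →₀ ℕ) (Sum.inr i)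
          = m (Sum.inr i) + if l = i then 1 else 0 := by
        intro i
        rw [Finsupp.add_apply, Finsupp.single_apply]
        congr 1
        simp [Sum.inr.injEq]
      rw [Finset.sum_congr rfl fun i _ => this i, Finset.sum_add_distrib,
        Finset.sum_ite_eq, if_pos (Finset.mem_univ l)]
  have hDbi : IsBihomogeneous D j (k - 1) := fun m hm =>
    ⟨(hDsupp m hm).1, by have := (hDsupp m hm).2; omega⟩
  have hk0 : k = 0 → D = 0 := by
    intro hk
    by_contra h
    obtain ⟨m, hm⟩ := MvPolynomial.ne_zero_iff.mp h
    have := (hDsupp m (mem_support_iff.mpr hm)).2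
    omega
  have hDharm : IsFormallyHarmonic D := by
    show ∑ i : Fin N, pderiv (Sum.inl i) (pderiv (Sum.inr i) D) = 0
    have step : ∀ i : Fin N, pderiv (Sum.inl i) (pderiv (Sum.inr i) D)
        = pderiv (Sum.inr l) (pderiv (Sum.inl i) (pderiv (Sum.inr i) P)) := by
      intro i
      rw [hDdef, my_pderiv_comm (Sum.inr i) (Sum.inr l), my_pderiv_comm (Sum.inl i) (Sum.inr l)]
    rw [Finset.sum_congr rfl fun i _ => step i, ← map_sum, hharm', map_zero]
  have hDharm' : ∑ i : Fin N, pderiv (Sum.inl i) (pderiv (Sum.inr i) D) = 0 := hDharm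
  -- Δ(X_l * P) = D
  have hXP : ∑ i : Fin N, pderiv (Sum.inl i) (pderiv (Sum.inr i) (X (Sum.inl l) * P)) = D := by
    have step : ∀ i : Fin N, pderiv (Sum.inl i) (pderiv (Sum.inr i) (X (Sum.inl l) * P))
        = (if i = l then D else 0)
          + X (Sum.inl l) * pderiv (Sum.inl i) (pderiv (Sum.inr i) P) := by
      intro i
      rw [pderiv_mul, pderiv_X_of_ne (by simp), zero_mul, zero_add, pderiv_mul]
      congr 1
      by_cases h : i = l
      · subst h
        rw [pderiv_X_self, one_mul, if_pos rfl, hDdef]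
      · rw [pderiv_X_of_ne (fun hh => (Ne.symm h) (Sum.inl.inj hh)), zero_mul, if_neg h]
    rw [Finset.sum_congr rfl fun i _ => step i, Finset.sum_add_distrib, ← Finset.mul_sum,
      hharm', mul_zero, add_zero, Finset.sum_ite_eq', if_pos (Finset.mem_univ l)]
  -- Δ(R * D)
  have hRD : ∑ i : Fin N, pderiv (Sum.inl i) (pderiv (Sum.inr i) (R * D))
      = C ((N : ℂ) + j + ((k - 1 : ℕ) : ℂ)) * D := by
    have step : ∀ i : Fin N, pderiv (Sum.inl i) (pderiv (Sum.inr i) (R * D))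
        = D + X (Sum.inl i) * pderiv (Sum.inl i) D + X (Sum.inr i) * pderiv (Sum.inr i) D
          + R * pderiv (Sum.inl i) (pderiv (Sum.inr i) D) := by
      intro i
      rw [pderiv_mul, my_pderiv_inr_sumXX i, map_add, pderiv_mul, pderiv_mul,
        pderiv_X_self, one_mul, my_pderiv_inl_sumXX i]
      ring
    rw [Finset.sum_congr rfl fun i _ => step i, Finset.sum_add_distrib, Finset.sum_add_distrib,
      Finset.sum_add_distrib, Finset.sum_const, ← Finset.mul_sum, hDharm', mul_zero, add_zero,
      my_euler Sum.inl D j (fun m hm => (hDbi m hm).1),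
      my_euler Sum.inr D (k - 1) (fun m hm => (hDbi m hm).2),
      Finset.card_univ, Fintype.card_fin,
      ← Nat.cast_smul_eq_nsmul ℂ, smul_eq_C_mul, C_add, C_add, add_mul, add_mul]
  -- harmonicity of the combination
  have hQharm : IsFormallyHarmonic (X (Sum.inl l) * P - C c * R * D) := by
    show ∑ i : Fin N,
        pderiv (Sum.inl i) (pderiv (Sum.inr i) (X (Sum.inl l) * P - C c * R * D)) = 0
    have step : ∀ i : Fin N,
        pderiv (Sum.inl i) (pderiv (Sum.inr i) (X (Sum.inl l) * P - C c * R * D))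
          = pderiv (Sum.inl i) (pderiv (Sum.inr i) (X (Sum.inl l) * P))
            - C c * pderiv (Sum.inl i) (pderiv (Sum.inr i) (R * D)) := by
      intro i
      rw [mul_assoc, map_sub, map_sub, pderiv_C_mul, pderiv_C_mul]
    rw [Finset.sum_congr rfl fun i _ => step i, Finset.sum_sub_distrib, ← Finset.mul_sum,
      hXP, hRD]
    by_cases hk : k = 0
    · rw [hk0 hk, mul_zero, mul_zero, sub_zero]
    · have hk1 : 1 ≤ k := Nat.one_le_iff_ne_zero.mpr hk
      have hcast : ((k - 1 : ℕ) : ℂ) = (k : ℂ) - 1 := by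
        rw [Nat.cast_sub hk1, Nat.cast_one]
      have hne : (N : ℂ) - 1 + j + k ≠ 0 := by
        have h1 : ((N - 1 + j + k : ℕ) : ℂ) = (N : ℂ) - 1 + (j : ℂ) + (k : ℂ) := by
          rw [Nat.cast_add, Nat.cast_add, Nat.cast_sub (by omega : 1 ≤ N), Nat.cast_one]
        rw [← h1]
        exact Nat.cast_ne_zero.mpr (by omega)
      rw [← mul_assoc, ← C_mul, hcast, hc,
        show 1 / ((N : ℂ) - 1 + ↑j + ↑k) * ((N : ℂ) + ↑j + ((k : ℂ) - 1)) = 1 by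
          rw [show (N : ℂ) + ↑j + ((k : ℂ) - 1) = (N : ℂ) - 1 + ↑j + ↑k by ring,
            one_div, inv_mul_cancel₀ hne],
        C_1, one_mul, sub_self]
  -- bihomogeneity of the combination
  have hRbi : IsBihomogeneous R 1 1 :=
    IsBihomogeneous.sum _ _ fun i _ => (isBihomogeneous_X_inl i).mul (isBihomogeneous_X_inr i)
  have hb1 : IsBihomogeneous (X (Sum.inl l) * P) (j + 1) k :=
    ((isBihomogeneous_X_inl l).mul hbi).cast (Nat.add_comm 1 j) (Nat.zero_add k)
  have hb2 : IsBihomogeneous (C c * R * D) (j + 1) k := by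
    by_cases hk : k = 0
    · rw [hk0 hk, mul_zero]
      intro m hm
      simp at hm
    · exact (((isBihomogeneous_C c).mul hRbi).mul hDbi).cast (by omega) (by omega)
  exact ⟨⟨hDbi, hk0, hDharm⟩, hb1.sub hb2, hQharm⟩
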